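/- Let ħ > 0, let ψ : ℝ² → ℂ² be continuously differentiable, and define n_s(r) := (1/2)·ψ(r)*σ_s ψ(r) and J_s^k(r) := (ħ/2)·Im( ψ(r)*σ_s ∂^k ψ(r) ). Then for every r ∈ ℝ², every s = 1,2,3 and every k = 1,2: 2·Σ_{i,j=1}^{3} η_{sij}·n_i(r)·J_j^k(r) = ħ·( n₀(r)·∂^k n_s(r) − n_s(r)·∂^k n₀(r) ), where η is the Levi-Civita symbol on {1,2,3}. -/

import Mathlib

open Matrix

/-- The Pauli matrices `σ₀, σ₁, σ₂, σ₃` as 2×2 complex matrices. -/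
noncomputable def pauli : Fin 4 → Matrix (Fin 2) (Fin 2) ℂ :=
  ![!![1, 0; 0, 1], !![0, 1; 1, 0], !![0, -Complex.I; Complex.I, 0], !![1, 0; 0, -1]]

/-- The Levi-Civita symbol on three indices (indexed by `Fin 3`):
totally antisymmetric with `leviCivita 0 1 2 = 1`. -/
def leviCivita (i j k : Fin 3) : ℤ :=
  ((j : ℤ) - (i : ℤ)) * ((k : ℤ) - (j : ℤ)) * ((k : ℤ) - (i : ℤ)) / 2

/-- The spinorial densities `n_s(r) := (1/2)·ψ(r)*σ_s ψ(r)` of a pure state. -/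
noncomputable def spinDensity (ψ : EuclideanSpace ℝ (Fin 2) → Fin 2 → ℂ) (s : Fin 4)
    (r : EuclideanSpace ℝ (Fin 2)) : ℝ :=
  ((1 / 2 : ℂ) * (star (ψ r) ⬝ᵥ (pauli s).mulVec (ψ r))).re

/-- The spinorial currents `J_s^k(r) := (ħ/2)·Im(ψ(r)*σ_s ∂^k ψ(r))` of a pure state. -/
noncomputable def spinCurrent (hbar : ℝ) (ψ : EuclideanSpace ℝ (Fin 2) → Fin 2 → ℂ)
    (s : Fin 4) (k : Fin 2) (r : EuclideanSpace ℝ (Fin 2)) : ℝ :=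
  (hbar / 2) * (star (ψ r) ⬝ᵥ (pauli s).mulVec
      (fun i => fderiv ℝ (fun y => ψ y i) r (EuclideanSpace.single k 1))).im

lemma quad_fderiv {E : Type*} [NormedAddCommGroup E] [NormedSpace ℝ E]
    (a b : E → ℂ) (A B : E →L[ℝ] ℂ) (r : E)
    (ha : HasFDerivAt a A r) (hb : HasFDerivAt b B r)
    (c00 c01 c10 c11 : ℂ) (v : E) :
    fderiv ℝ (fun y => ((1/2 : ℂ) * (star (a y) * (c00 * a y + c01 * b y)
        + star (b y) * (c10 * a y + c11 * b y))).re) r v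
      = ((1/2 : ℂ) * (star (A v) * (c00 * a r + c01 * b r)
          + star (a r) * (c00 * A v + c01 * B v)
          + star (B v) * (c10 * a r + c11 * b r)
          + star (b r) * (c10 * A v + c11 * B v))).re := by
  have h1 : HasFDerivAt (fun y => c00 * a y + c01 * b y) (c00 • A + c01 • B) r :=
    (ha.const_mul c00).add (hb.const_mul c01)
  have h2 : HasFDerivAt (fun y => c10 * a y + c11 * b y) (c10 • A + c11 • B) r :=
    (ha.const_mul c10).add (hb.const_mul c11)
  have t := (((ha.star.mul h1).add (hb.star.mul h2)).const_mul (1/2 : ℂ))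
  have h : HasFDerivAt (fun y => ((1/2 : ℂ) * (star (a y) * (c00 * a y + c01 * b y)
      + star (b y) * (c10 * a y + c11 * b y))).re) (Complex.reCLM.comp _) r :=
    Complex.reCLM.hasFDerivAt.comp r t
  rw [h.fderiv]
  simp only [ContinuousLinearMap.coe_comp', Function.comp_apply, Complex.reCLM_apply,
    ContinuousLinearMap.add_apply, ContinuousLinearMap.smul_apply, smul_eq_mul,
    ContinuousLinearMap.coe_smul', Pi.smul_apply, ContinuousLinearEquiv.coe_coe]
  congr 1
  simp only [starL'_apply]
  ring

set_option maxHeartbeats 1000000 in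
/-- For a continuously differentiable pure state `ψ : ℝ² → ℂ²`, for every `r`, every
`s = 1,2,3` (here `s : Fin 3` labels `s+1`) and every `k = 1,2`:
`2·Σ_{i,j=1}^{3} η_{sij}·n_i(r)·J_j^k(r) = ħ·(n₀(r)·∂^k n_s(r) − n_s(r)·∂^k n₀(r))`. -/
theorem pure_state_orthogonal_current_identity (hbar : ℝ) (hbar_pos : 0 < hbar)
    (ψ : EuclideanSpace ℝ (Fin 2) → Fin 2 → ℂ) (hψ : ContDiff ℝ 1 ψ) :
    ∀ (r : EuclideanSpace ℝ (Fin 2)) (s : Fin 3) (k : Fin 2),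
      2 * ∑ i : Fin 3, ∑ j : Fin 3,
          (leviCivita s i j : ℝ) * spinDensity ψ i.succ r * spinCurrent hbar ψ j.succ k r
        = hbar * (spinDensity ψ 0 r
              * fderiv ℝ (fun y => spinDensity ψ s.succ y) r (EuclideanSpace.single k 1)
            - spinDensity ψ s.succ r
              * fderiv ℝ (fun y => spinDensity ψ 0 y) r (EuclideanSpace.single k 1)) := by
  intro r s k
  have hdiff : ∀ i, Differentiable ℝ (fun y => ψ y i) := fun i =>
    (differentiable_pi.mp (hψ.differentiable one_ne_zero)) i
  have ha : HasFDerivAt (fun y => ψ y 0) (fderiv ℝ (fun y => ψ y 0) r) r :=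
    (hdiff 0 r).hasFDerivAt
  have hb : HasFDerivAt (fun y => ψ y 1) (fderiv ℝ (fun y => ψ y 1) r) r :=
    (hdiff 1 r).hasFDerivAt
  have expand : ∀ (M : Matrix (Fin 2) (Fin 2) ℂ) (u w : Fin 2 → ℂ),
      star u ⬝ᵥ M.mulVec w = star (u 0) * (M 0 0 * w 0 + M 0 1 * w 1)
        + star (u 1) * (M 1 0 * w 0 + M 1 1 * w 1) := by
    intro M u w
    simp [dotProduct, Matrix.mulVec, Fin.sum_univ_two, mul_add]
  have key : ∀ t : Fin 4, fderiv ℝ (fun y => spinDensity ψ t y) r (EuclideanSpace.single k 1)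
      = ((1/2 : ℂ) * (star (fderiv ℝ (fun y => ψ y 0) r (EuclideanSpace.single k 1))
            * (pauli t 0 0 * ψ r 0 + pauli t 0 1 * ψ r 1)
          + star (ψ r 0) * (pauli t 0 0 * fderiv ℝ (fun y => ψ y 0) r (EuclideanSpace.single k 1)
            + pauli t 0 1 * fderiv ℝ (fun y => ψ y 1) r (EuclideanSpace.single k 1))
          + star (fderiv ℝ (fun y => ψ y 1) r (EuclideanSpace.single k 1))
            * (pauli t 1 0 * ψ r 0 + pauli t 1 1 * ψ r 1)
          + star (ψ r 1) * (pauli t 1 0 * fderiv ℝ (fun y => ψ y 0) r (EuclideanSpace.single k 1)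
            + pauli t 1 1 * fderiv ℝ (fun y => ψ y 1) r (EuclideanSpace.single k 1)))).re := by
    intro t
    have e : (fun y => spinDensity ψ t y) = fun y =>
        ((1/2 : ℂ) * (star (ψ y 0) * (pauli t 0 0 * ψ y 0 + pauli t 0 1 * ψ y 1)
          + star (ψ y 1) * (pauli t 1 0 * ψ y 0 + pauli t 1 1 * ψ y 1))).re := by
      funext y
      rw [spinDensity, expand]
    rw [e]
    exact quad_fderiv _ _ _ _ _ ha hb _ _ _ _ _
  have dens : ∀ t : Fin 4, spinDensity ψ t r
      = ((1/2 : ℂ) * (star (ψ r 0) * (pauli t 0 0 * ψ r 0 + pauli t 0 1 * ψ r 1)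
          + star (ψ r 1) * (pauli t 1 0 * ψ r 0 + pauli t 1 1 * ψ r 1))).re := by
    intro t; rw [spinDensity, expand]
  have curr : ∀ t : Fin 4, spinCurrent hbar ψ t k r
      = (hbar / 2) * ((star (ψ r 0)
          * (pauli t 0 0 * fderiv ℝ (fun y => ψ y 0) r (EuclideanSpace.single k 1)
            + pauli t 0 1 * fderiv ℝ (fun y => ψ y 1) r (EuclideanSpace.single k 1))
        + star (ψ r 1)
          * (pauli t 1 0 * fderiv ℝ (fun y => ψ y 0) r (EuclideanSpace.single k 1)
            + pauli t 1 1 * fderiv ℝ (fun y => ψ y 1) r (EuclideanSpace.single k 1)))).im := by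
    intro t; rw [spinCurrent, expand]
  rw [key 0, key s.succ]
  simp only [Fin.sum_univ_three, dens, curr]
  have s1 : (0 : Fin 3).succ = (1 : Fin 4) := rfl
  have s2 : (1 : Fin 3).succ = (2 : Fin 4) := rfl
  have s3 : (2 : Fin 3).succ = (3 : Fin 4) := rfl
  set a := ψ r 0
  set b := ψ r 1
  set a' := fderiv ℝ (fun y => ψ y 0) r (EuclideanSpace.single k 1)
  set b' := fderiv ℝ (fun y => ψ y 1) r (EuclideanSpace.single k 1)
  fin_cases s <;>
  · norm_num [s1, s2, s3, pauli, leviCivita, Fin.succ]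
    try simp only [Complex.add_re, Complex.add_im, Complex.mul_re, Complex.mul_im,
      Complex.sub_re, Complex.sub_im, Complex.neg_re, Complex.neg_im, Complex.I_re,
      Complex.I_im, Complex.conj_re, Complex.conj_im, Complex.one_re, Complex.one_im,
      Complex.zero_re, Complex.zero_im, Complex.ofReal_re, Complex.ofReal_im,
      Complex.div_re, Complex.div_im, Complex.normSq]
    ring
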